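/- Off-policy policy-gradient identity (the derivation of equation (27)): under the differentiable policy family assumptions, fix q : A → ℝ, b : A → ℝ, and τ ∈ ℝ, and define F : ℝ → ℝ by F(θ) = ∑_a π(θ, a) · ( q a − τ · ( log(π(θ, a)) − b a ) ). Then F has derivative ∑_a π(θ₀, a) · (d a / π(θ₀, a)) · ( q a − τ · ( log(π(θ₀, a)) − b a ) ) at θ₀; i.e., the gradient of the KL-regularized expected value equals the expectation under π(θ₀, ·) of the score times ( q a − τ(log π(θ₀, a) − b a) ). -/

import Mathlib

open Finset

theorem stmt16 {A : Type*} [Fintype A] [Nonempty A]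
    (π : ℝ → A → ℝ) (hpos : ∀ θ a, 0 < π θ a) (hsum : ∀ θ, ∑ a, π θ a = 1)
    (θ₀ : ℝ) (d : A → ℝ) (hd : ∀ a, HasDerivAt (fun θ => π θ a) (d a) θ₀)
    (q b : A → ℝ) (τ : ℝ) :
    HasDerivAt (fun θ => ∑ a, π θ a * (q a - τ * (Real.log (π θ a) - b a)))
      (∑ a, π θ₀ a * (d a / π θ₀ a) * (q a - τ * (Real.log (π θ₀ a) - b a))) θ₀ := by
  have hdsum : ∑ a, d a = 0 := by
    have h1 : HasDerivAt (fun θ => ∑ a, π θ a) (∑ a, d a) θ₀ :=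
      HasDerivAt.fun_sum fun a _ => hd a
    have h2 : HasDerivAt (fun _ : ℝ => (1 : ℝ)) 0 θ₀ := hasDerivAt_const _ _
    have : (fun θ => ∑ a, π θ a) = fun _ => (1 : ℝ) := funext hsum
    rw [this] at h1
    exact h1.unique h2
  have key : ∀ a : A, HasDerivAt (fun θ => π θ a * (q a - τ * (Real.log (π θ a) - b a)))
      (d a * (q a - τ * (Real.log (π θ₀ a) - b a)) - τ * d a) θ₀ := by
    intro a
    have hlog : HasDerivAt (fun θ => Real.log (π θ a)) (d a / π θ₀ a) θ₀ := by
      have := (hd a).log (hpos θ₀ a).ne'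
      simpa [div_eq_mul_inv] using this
    have h2 : HasDerivAt (fun θ => q a - τ * (Real.log (π θ a) - b a))
        (-(τ * (d a / π θ₀ a))) θ₀ := by
      have := ((hlog.sub_const (b a)).const_mul τ).const_sub (q a)
      simpa using this
    have := (hd a).fun_mul h2
    refine this.congr_deriv ?_; symm
    have hc : π θ₀ a * (τ * (d a / π θ₀ a)) = τ * d a := by
      rw [mul_left_comm, mul_comm (π θ₀ a), div_mul_cancel₀ _ (hpos θ₀ a).ne']
    rw [mul_neg, hc]; ring
  have hmain := HasDerivAt.fun_sum (fun a (_ : a ∈ univ) => key a)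
  refine hmain.congr_deriv ?_; symm
  rw [sum_sub_distrib, ← mul_sum, hdsum, mul_zero, sub_zero]
  apply sum_congr rfl
  intro a _
  rw [mul_comm (π θ₀ a), div_mul_cancel₀ _ (hpos θ₀ a).ne']
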